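/- arXiv:1202.4678 — 2 statements merged into one kernel-verified Lean document; each statement's English description precedes it below -/
import Mathlib

section
/- Partial equivalence relations on a fixed set, with the arrow and product constructions, form a Cartesian closed category: objects are PERs, morphisms A→B are equivalence classes of elements in the domain of the arrow PER A→B, identity is the class of λx.x, composition of [t]:A→B and [t']:B→C is [λz. t'(t z)], the product A×B with Church projections is a categorical product, the total relation is terminal, and B^A = A→B with ev = [λx.(π₁ x)(π₂ x)] and Λ([t]) = [λx.λy. t⟨x,y⟩] gives exponentials. -/
/- Untyped lambda calculus in de Bruijn notation. -/
inductive Lam : Type where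
  | var : ℕ → Lam
  | app : Lam → Lam → Lam
  | abs : Lam → Lam

namespace Lam

/-- Shift free de Bruijn indices `≥ k` by `d`. -/
def lift (d k : ℕ) : Lam → Lam
  | .var i => .var (if i < k then i else i + d)
  | .app t u => .app (lift d k t) (lift d k u)
  | .abs t => .abs (lift d (k+1) t)

/-- Capture-avoiding substitution of `u` for variable `k`. -/
def subst (u : Lam) (k : ℕ) : Lam → Lam
  | .var i => if i < k then .var i else if i = k then lift k 0 u else .var (i-1)
  | .app t v => .app (subst u k t) (subst u k v)
  | .abs t => .abs (subst u (k+1) t)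

/-- One-step β-reduction, closed under all contexts. -/
inductive Beta : Lam → Lam → Prop where
  | beta (t u : Lam) : Beta (.app (.abs t) u) (subst u 0 t)
  | appL {t t'} (u : Lam) : Beta t t' → Beta (.app t u) (.app t' u)
  | appR (t : Lam) {u u'} : Beta u u' → Beta (.app t u) (.app t u')
  | absC {t t'} : Beta t t' → Beta (.abs t) (.abs t')

/-- β-equivalence: the reflexive symmetric transitive closure of β-reduction. -/
def BetaEq : Lam → Lam → Prop := Relation.EqvGen Beta

/-- Iterated abstraction `λ^k`. -/
def absN : ℕ → Lam → Lam
  | 0, t => t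
  | k+1, t => .abs (absN k t)

/-- Church tuple `⟨t₁,…,t_k⟩ = λf. f t₁ … t_k`. -/
def tuple (ts : List Lam) : Lam :=
  .abs ((ts.map (lift 1 0)).foldl .app (.var 0))

/-- Church projection `π_i^k = λp. p (λx₁…x_k. x_i)` (here `i` is 0-indexed:
`proj k i` projects the `(i+1)`-st of `k` components). -/
def proj (k i : ℕ) : Lam :=
  .abs (.app (.var 0) (absN k (.var (k - 1 - i))))

/-- Compatibility of a relation with β-equivalence. -/
def Compat (R : Lam → Lam → Prop) : Prop :=
  ∀ t t' t₀, R t t' → BetaEq t₀ t' → R t t₀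

/-- A PER on lambda terms compatible with β-equivalence. -/
def IsPer (R : Lam → Lam → Prop) : Prop :=
  Symmetric R ∧ Transitive R ∧ Compat R

/-- The arrow PER `A → B`. -/
def Arr (A B : Lam → Lam → Prop) : Lam → Lam → Prop :=
  fun t t' => ∀ u u', A u u' → B (.app t u) (.app t' u')

/-- The identity morphism is the class of `λx.x`. -/
def idTm : Lam := .abs (.var 0)

/-- Diagrammatic composition of (representatives of) morphisms:
`f ; g = λz. g (f z)`. -/
def compTm (f g : Lam) : Lam :=
  .abs (.app (lift 1 0 g) (.app (lift 1 0 f) (.var 0)))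

/-- Church pair. -/
def pairTm (a b : Lam) : Lam := tuple [a, b]

/-- First projection `π₁`. -/
def fstTm : Lam := proj 2 0

/-- Second projection `π₂`. -/
def sndTm : Lam := proj 2 1

/-- The product PER `A × B`. -/
def ProdRel2 (A B : Lam → Lam → Prop) : Lam → Lam → Prop :=
  fun t u => A (.app fstTm t) (.app fstTm u) ∧ B (.app sndTm t) (.app sndTm u)

/-- Pairing of morphisms: `⟨f,g⟩ = λx.⟨f x, g x⟩`. -/
def pairingTm (f g : Lam) : Lam :=
  .abs (pairTm (.app (lift 1 0 f) (.var 0)) (.app (lift 1 0 g) (.var 0)))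

/-- The terminal PER: the total relation. -/
def UnoRel : Lam → Lam → Prop := fun _ _ => True

/-- Evaluation morphism `ev = λx.(π₁ x)(π₂ x)`. -/
def evTm : Lam := .abs (.app (.app fstTm (.var 0)) (.app sndTm (.var 0)))

/-- Currying `Λ(f) = λx.λy. f ⟨x,y⟩`. -/
def curryTm (f : Lam) : Lam :=
  .abs (.abs (.app (lift 2 0 f) (pairTm (.var 1) (.var 0))))

/-! ### Auxiliary lemmas -/

theorem lift_zero : ∀ (t : Lam) (k : ℕ), lift 0 k t = t
  | .var i, k => by simp [lift]
  | .app t u, k => by simp [lift, lift_zero t, lift_zero u]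
  | .abs t, k => by simp [lift, lift_zero t]

theorem lift_lift : ∀ (t : Lam) (j a b : ℕ), lift a j (lift b j t) = lift (a+b) j t
  | .var i, j, a, b => by
    by_cases h : i < j
    · simp [lift, h]
    · simp only [lift, if_neg h]
      rw [if_neg (by omega)]
      congr 1
      all_goals omega
  | .app t u, j, a, b => by simp [lift, lift_lift t, lift_lift u]
  | .abs t, j, a, b => by simp [lift, lift_lift t]

theorem subst_lift : ∀ (t : Lam) (j k d : ℕ) (u : Lam), j ≤ k → k ≤ j + d →
    subst u k (lift (d+1) j t) = lift d j t
  | .var i, j, k, d, u, h1, h2 => by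
    simp only [lift]
    split
    · next hij => simp only [subst]; rw [if_pos (by omega)]
    · next hij =>
      simp only [subst]
      rw [if_neg (by omega), if_neg (by omega)]
      congr 1
      all_goals omega
  | .app t v, j, k, d, u, h1, h2 => by
    simp [lift, subst, subst_lift t j k d u h1 h2, subst_lift v j k d u h1 h2]
  | .abs t, j, k, d, u, h1, h2 => by
    simp [lift, subst, subst_lift t (j+1) (k+1) d u (by omega) (by omega)]

theorem subst_lift1 (t u : Lam) (k : ℕ) : subst u k (lift 1 k t) = t := by
  have h := subst_lift t k k 0 u le_rfl (by omega)
  simpa [lift_zero] using h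

theorem subst_lift21 (t u : Lam) : subst u 1 (lift 2 0 t) = lift 1 0 t :=
  subst_lift t 0 1 1 u (by omega) (by omega)

theorem fstTm_eq : fstTm = .abs (.app (.var 0) (.abs (.abs (.var 1)))) := rfl
theorem sndTm_eq : sndTm = .abs (.app (.var 0) (.abs (.abs (.var 0)))) := rfl
theorem pairTm_eq (a b : Lam) :
    pairTm a b = .abs (.app (.app (.var 0) (lift 1 0 a)) (lift 1 0 b)) := rfl

/-! ### BetaEq basics -/

theorem beq_refl (t : Lam) : BetaEq t t := Relation.EqvGen.refl t
theorem beq_symm {t u : Lam} (h : BetaEq t u) : BetaEq u t := Relation.EqvGen.symm _ _ h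
theorem beq_trans {t u v : Lam} (h1 : BetaEq t u) (h2 : BetaEq u v) : BetaEq t v :=
  Relation.EqvGen.trans _ _ _ h1 h2
theorem beq_step {t u : Lam} (h : Beta t u) : BetaEq t u := Relation.EqvGen.rel _ _ h

theorem beq_appL {t t'} (u : Lam) (h : BetaEq t t') : BetaEq (.app t u) (.app t' u) := by
  induction h with
  | rel a b hab => exact beq_step (.appL u hab)
  | refl a => exact beq_refl _
  | symm a b _ ih => exact beq_symm ih
  | trans a b c _ _ ih1 ih2 => exact beq_trans ih1 ih2

theorem beq_appR (t : Lam) {u u'} (h : BetaEq u u') : BetaEq (.app t u) (.app t u') := by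
  induction h with
  | rel a b hab => exact beq_step (.appR t hab)
  | refl a => exact beq_refl _
  | symm a b _ ih => exact beq_symm ih
  | trans a b c _ _ ih1 ih2 => exact beq_trans ih1 ih2

theorem beq_app {t t' u u'} (h1 : BetaEq t t') (h2 : BetaEq u u') :
    BetaEq (.app t u) (.app t' u') :=
  beq_trans (beq_appL u h1) (beq_appR t' h2)

/-! ### β-computation lemmas -/

theorem beq_id (u : Lam) : BetaEq (.app idTm u) u := by
  have h := Beta.beta (.var 0) u
  simpa [idTm, subst, lift_zero] using beq_step h

theorem beq_comp (f g u : Lam) :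
    BetaEq (.app (compTm f g) u) (.app g (.app f u)) := by
  have h := Beta.beta (.app (lift 1 0 g) (.app (lift 1 0 f) (.var 0))) u
  simpa [compTm, subst, subst_lift1, lift_zero] using beq_step h

theorem beq_fst (a b : Lam) : BetaEq (.app fstTm (pairTm a b)) a := by
  have s1 : Beta (.app fstTm (pairTm a b)) (.app (pairTm a b) (.abs (.abs (.var 1)))) := by
    have h := Beta.beta (.app (.var 0) (.abs (.abs (.var 1)))) (pairTm a b)
    simpa [fstTm_eq, subst, lift_zero] using h
  have s2 : Beta (.app (pairTm a b) (.abs (.abs (.var 1))))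
      (.app (.app (.abs (.abs (.var 1))) a) b) := by
    have h := Beta.beta (.app (.app (.var 0) (lift 1 0 a)) (lift 1 0 b)) (.abs (.abs (.var 1)))
    simpa [pairTm_eq, subst, subst_lift1, lift_zero] using h
  have s3 : Beta (.app (.abs (.abs (.var 1))) a) (.abs (lift 1 0 a)) := by
    have h := Beta.beta (.abs (.var 1)) a
    simpa [subst] using h
  have s4 : Beta (.app (.abs (lift 1 0 a)) b) a := by
    have h := Beta.beta (lift 1 0 a) b
    simpa [subst_lift1] using h
  exact beq_trans (beq_step s1) (beq_trans (beq_step s2)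
    (beq_trans (beq_appL b (beq_step s3)) (beq_step s4)))

theorem beq_snd (a b : Lam) : BetaEq (.app sndTm (pairTm a b)) b := by
  have s1 : Beta (.app sndTm (pairTm a b)) (.app (pairTm a b) (.abs (.abs (.var 0)))) := by
    have h := Beta.beta (.app (.var 0) (.abs (.abs (.var 0)))) (pairTm a b)
    simpa [sndTm_eq, subst, lift_zero] using h
  have s2 : Beta (.app (pairTm a b) (.abs (.abs (.var 0))))
      (.app (.app (.abs (.abs (.var 0))) a) b) := by
    have h := Beta.beta (.app (.app (.var 0) (lift 1 0 a)) (lift 1 0 b)) (.abs (.abs (.var 0)))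
    simpa [pairTm_eq, subst, subst_lift1, lift_zero] using h
  have s3 : Beta (.app (.abs (.abs (.var 0))) a) (.abs (.var 0)) := by
    have h := Beta.beta (.abs (.var 0)) a
    simpa [subst] using h
  have s4 : Beta (.app (.abs (.var 0)) b) b := by
    have h := Beta.beta (.var 0) b
    simpa [subst, lift_zero] using h
  exact beq_trans (beq_step s1) (beq_trans (beq_step s2)
    (beq_trans (beq_appL b (beq_step s3)) (beq_step s4)))

theorem beq_pairing (f g u : Lam) :
    BetaEq (.app (pairingTm f g) u) (pairTm (.app f u) (.app g u)) := by
  have h := Beta.beta (pairTm (.app (lift 1 0 f) (.var 0)) (.app (lift 1 0 g) (.var 0))) u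
  simpa [pairingTm, pairTm_eq, lift, subst, lift_lift, subst_lift1, subst_lift21, lift_zero]
    using beq_step h

theorem beq_ev (p : Lam) :
    BetaEq (.app evTm p) (.app (.app fstTm p) (.app sndTm p)) := by
  have h := Beta.beta (.app (.app fstTm (.var 0)) (.app sndTm (.var 0))) p
  simpa [evTm, fstTm_eq, sndTm_eq, subst, lift_zero] using beq_step h

theorem beq_curry (f u v : Lam) :
    BetaEq (.app (.app (curryTm f) u) v) (.app f (pairTm u v)) := by
  have s1 : Beta (.app (curryTm f) u)
      (.abs (.app (lift 1 0 f) (.abs (.app (.app (.var 0) (lift 2 0 u)) (.var 1))))) := by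
    have h := Beta.beta (.abs (.app (lift 2 0 f) (pairTm (.var 1) (.var 0)))) u
    simpa [curryTm, pairTm_eq, lift, subst, subst_lift21] using h
  have s2 : Beta (.app (.abs (.app (lift 1 0 f)
        (.abs (.app (.app (.var 0) (lift 2 0 u)) (.var 1))))) v)
      (.app f (pairTm u v)) := by
    have h := Beta.beta (.app (lift 1 0 f)
      (.abs (.app (.app (.var 0) (lift 2 0 u)) (.var 1)))) v
    simpa [pairTm_eq, subst, subst_lift1, subst_lift21] using h
  exact beq_trans (beq_appL v (beq_step s1)) (beq_step s2)

/-! ### PER lemmas -/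

theorem per_congr {R : Lam → Lam → Prop} (hR : IsPer R) {t t' s s' : Lam}
    (h : R t t') (h1 : BetaEq s t) (h2 : BetaEq s' t') : R s s' := by
  obtain ⟨hs, ht, hc⟩ := hR
  have k1 : R t s' := hc t t' s' h h2
  have k2 : R s' s := hc s' t s (hs k1) h1
  exact hs k2

theorem isPer_arr {A B : Lam → Lam → Prop} (hA : IsPer A) (hB : IsPer B) :
    IsPer (Arr A B) := by
  obtain ⟨hAs, hAt, hAc⟩ := hA
  obtain ⟨hBs, hBt, hBc⟩ := hB
  refine ⟨?_, ?_, ?_⟩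
  · intro t t' h u u' hu
    exact hBs (h u' u (hAs hu))
  · intro t t' t'' h1 h2 u u' hu
    exact hBt (h1 u u (hAt hu (hAs hu))) (h2 u u' hu)
  · intro t t' t₀ h hbe u u' hu
    exact hBc _ _ _ (h u u' hu) (beq_appL u' hbe)

theorem isPer_prod {A B : Lam → Lam → Prop} (hA : IsPer A) (hB : IsPer B) :
    IsPer (ProdRel2 A B) := by
  obtain ⟨hAs, hAt, hAc⟩ := hA
  obtain ⟨hBs, hBt, hBc⟩ := hB
  refine ⟨?_, ?_, ?_⟩
  · intro t u h; exact ⟨hAs h.1, hBs h.2⟩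
  · intro t u v h1 h2; exact ⟨hAt h1.1 h2.1, hBt h1.2 h2.2⟩
  · intro t u t₀ h hbe
    exact ⟨hAc _ _ _ h.1 (beq_appR fstTm hbe), hBc _ _ _ h.2 (beq_appR sndTm hbe)⟩

theorem isPer_uno : IsPer UnoRel :=
  ⟨fun _ _ _ => trivial, fun _ _ _ _ _ => trivial, fun _ _ _ _ _ => trivial⟩

theorem beq_curry_lhs (h p : Lam) :
    BetaEq (.app (compTm (pairingTm (compTm fstTm h) sndTm) evTm) p)
           (.app (.app h (.app fstTm p)) (.app sndTm p)) := by
  refine beq_trans (beq_comp _ _ _) ?_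
  refine beq_trans (beq_appR _ (beq_pairing _ _ _)) ?_
  refine beq_trans (beq_ev _) ?_
  refine beq_app ?_ (beq_snd _ _)
  exact beq_trans (beq_fst _ _) (beq_comp _ _ _)
/-- Partial equivalence relations on lambda terms compatible with
β-equivalence form a Cartesian closed category: morphisms `A → B` are
equivalence classes of elements of the domain of the arrow PER `A → B`
(represented below by elements `f` with `f (A→B) f`, two representatives
giving the same morphism iff they are `A→B`-related), identity is the class of
`λx.x`, composition of `[f] : A → B` and `[g] : B → C` is `[λz. g (f z)]`,
the product PER `A × B` with Church projections is a categorical product, the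
total relation is terminal, and `B^A = A→B` with `ev = [λx.(π₁ x)(π₂ x)]` and
`Λ([f]) = [λx.λy. f ⟨x,y⟩]` gives exponentials. -/
theorem per_cartesian_closed :
    ∀ A B C D : Lam → Lam → Prop, IsPer A → IsPer B → IsPer C → IsPer D →
      -- the arrow and product constructions yield PERs
      (IsPer (Arr A B) ∧ IsPer (ProdRel2 A B) ∧ IsPer UnoRel) ∧
      -- identity morphism
      (Arr A A idTm idTm) ∧
      -- composition is well defined on classes
      (∀ f f' g g', Arr A B f f' → Arr B C g g' →
        Arr A C (compTm f g) (compTm f' g')) ∧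
      -- identity laws
      (∀ f, Arr A B f f →
        Arr A B (compTm idTm f) f ∧ Arr A B (compTm f idTm) f) ∧
      -- associativity of composition
      (∀ f g h, Arr A B f f → Arr B C g g → Arr C D h h →
        Arr A D (compTm (compTm f g) h) (compTm f (compTm g h))) ∧
      -- the total relation is terminal
      (Arr A UnoRel idTm idTm ∧
        ∀ f g, Arr A UnoRel f f → Arr A UnoRel g g → Arr A UnoRel f g) ∧
      -- projections are morphisms
      (Arr (ProdRel2 A B) A fstTm fstTm ∧ Arr (ProdRel2 A B) B sndTm sndTm) ∧
      -- pairing: existence, commutation and uniqueness (universal property)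
      (∀ f g, Arr C A f f → Arr C B g g →
        Arr C (ProdRel2 A B) (pairingTm f g) (pairingTm f g) ∧
        Arr C A (compTm (pairingTm f g) fstTm) f ∧
        Arr C B (compTm (pairingTm f g) sndTm) g ∧
        ∀ h, Arr C (ProdRel2 A B) h h →
          Arr C A (compTm h fstTm) f → Arr C B (compTm h sndTm) g →
          Arr C (ProdRel2 A B) h (pairingTm f g)) ∧
      -- evaluation is a morphism (A→B) × A ⟶ B
      (Arr (ProdRel2 (Arr A B) A) B evTm evTm) ∧
      -- currying: existence, commutation (ev ∘ (Λf × id) = f) and uniqueness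
      (∀ f, Arr (ProdRel2 C A) B f f →
        Arr C (Arr A B) (curryTm f) (curryTm f) ∧
        Arr (ProdRel2 C A) B
          (compTm (pairingTm (compTm fstTm (curryTm f)) sndTm) evTm) f ∧
        ∀ h, Arr C (Arr A B) h h →
          Arr (ProdRel2 C A) B
            (compTm (pairingTm (compTm fstTm h) sndTm) evTm) f →
          Arr C (Arr A B) h (curryTm f)) := by
  intro A B C D hA hB hC hD
  refine ⟨⟨isPer_arr hA hB, isPer_prod hA hB, isPer_uno⟩, ?_, ?_, ?_, ?_,
    ⟨fun _ _ _ => trivial, fun _ _ _ _ _ _ _ => trivial⟩,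
    ⟨fun _ _ h => h.1, fun _ _ h => h.2⟩, ?_, ?_, ?_⟩
  · -- identity morphism
    intro u u' hu
    exact per_congr hA hu (beq_id u) (beq_id u')
  · -- composition well defined
    intro f f' g g' hf hg u u' hu
    exact per_congr hC (hg _ _ (hf _ _ hu)) (beq_comp f g u) (beq_comp f' g' u')
  · -- identity laws
    intro f hf
    constructor
    · intro u u' hu
      exact per_congr hB (hf _ _ hu)
        (beq_trans (beq_comp idTm f u) (beq_appR f (beq_id u))) (beq_refl _)
    · intro u u' hu
      exact per_congr hB (hf _ _ hu)
        (beq_trans (beq_comp f idTm u) (beq_id _)) (beq_refl _)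
  · -- associativity
    intro f g h hf hg hh u u' hu
    refine per_congr hD (hh _ _ (hg _ _ (hf _ _ hu))) ?_ ?_
    · exact beq_trans (beq_comp _ _ _) (beq_appR _ (beq_comp _ _ _))
    · exact beq_trans (beq_comp _ _ _) (beq_comp _ _ _)
  · -- pairing
    intro f g hf hg
    refine ⟨?_, ?_, ?_, ?_⟩
    · intro u u' hu
      constructor
      · exact per_congr hA (hf _ _ hu)
          (beq_trans (beq_appR _ (beq_pairing f g u)) (beq_fst _ _))
          (beq_trans (beq_appR _ (beq_pairing f g u')) (beq_fst _ _))
      · exact per_congr hB (hg _ _ hu)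
          (beq_trans (beq_appR _ (beq_pairing f g u)) (beq_snd _ _))
          (beq_trans (beq_appR _ (beq_pairing f g u')) (beq_snd _ _))
    · intro u u' hu
      exact per_congr hA (hf _ _ hu)
        (beq_trans (beq_comp _ _ _)
          (beq_trans (beq_appR _ (beq_pairing f g u)) (beq_fst _ _)))
        (beq_refl _)
    · intro u u' hu
      exact per_congr hB (hg _ _ hu)
        (beq_trans (beq_comp _ _ _)
          (beq_trans (beq_appR _ (beq_pairing f g u)) (beq_snd _ _)))
        (beq_refl _)
    · intro h hh h1 h2 u u' hu
      constructor
      · exact per_congr hA (h1 _ _ hu)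
          (beq_symm (beq_trans (beq_comp _ _ _) (beq_refl _)))
          (beq_trans (beq_appR _ (beq_pairing f g u')) (beq_fst _ _))
      · exact per_congr hB (h2 _ _ hu)
          (beq_symm (beq_trans (beq_comp _ _ _) (beq_refl _)))
          (beq_trans (beq_appR _ (beq_pairing f g u')) (beq_snd _ _))
  · -- evaluation
    intro p q hpq
    exact per_congr hB (hpq.1 _ _ hpq.2) (beq_ev p) (beq_ev q)
  · -- currying
    intro f hf
    refine ⟨?_, ?_, ?_⟩
    · intro u u' hu v v' hv
      have hp : ProdRel2 C A (pairTm u v) (pairTm u' v') :=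
        ⟨per_congr hC hu (beq_fst u v) (beq_fst u' v'),
         per_congr hA hv (beq_snd u v) (beq_snd u' v')⟩
      exact per_congr hB (hf _ _ hp) (beq_curry f u v) (beq_curry f u' v')
    · intro p p' hpp
      have hp : ProdRel2 C A (pairTm (.app fstTm p) (.app sndTm p)) p' :=
        ⟨per_congr hC hpp.1 (beq_fst _ _) (beq_refl _),
         per_congr hA hpp.2 (beq_snd _ _) (beq_refl _)⟩
      refine per_congr hB (hf _ _ hp) ?_ (beq_refl _)
      exact beq_trans (beq_curry_lhs (curryTm f) p)
        (beq_curry f (.app fstTm p) (.app sndTm p))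
    · intro h hh hcomm u u' hu v v' hv
      have hp : ProdRel2 C A (pairTm u v) (pairTm u' v') :=
        ⟨per_congr hC hu (beq_fst u v) (beq_fst u' v'),
         per_congr hA hv (beq_snd u v) (beq_snd u' v')⟩
      refine per_congr hB (hcomm _ _ hp) ?_ (beq_curry f u' v')
      exact beq_symm (beq_trans (beq_curry_lhs h (pairTm u v))
        (beq_app (beq_appR h (beq_fst u v)) (beq_snd u v)))

end Lam
end

section
/- In a Cartesian closed category with object D, morphisms app : D → D^D and lam : D^D → D forming an isomorphism (lam;app = id and app;lam = id), a point fail : 1 → D, points c_i : 1 → D, and a morphism case : D^n × D → D, the diagram (D3) expressing the CaseApp rule commutes if and only if the diagram (D4) expressing the CaseLam rule commutes. -/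
open CategoryTheory Limits MonoidalCategory CartesianClosed

noncomputable section

variable {C : Type*} [Category C] [CartesianMonoidalCategory C] [MonoidalClosed C]

instance braidedOfCartesianMonoidal : BraidedCategory C :=
  BraidedCategory.ofCartesianMonoidalCategory

/-- Evaluation in the convention `B^A × A ⟶ B`. -/
def ev' (A B : C) : (A ⟹ B) ⊗ A ⟶ B := (β_ (A ⟹ B) A).hom ≫ (ihom.ev A).app B

/-- Currying in the convention `Y × A ⟶ B` gives `Y ⟶ B^A`. -/
def curry' {Y A B : C} (f : Y ⊗ A ⟶ B) : Y ⟶ A ⟹ B :=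
  MonoidalClosed.curry ((β_ A Y).hom ≫ f)

/-- Diagram (D3), expressing the CaseApp rule: both ways around the square
`(D^n × D) × D ⟶ D` coincide. -/
def DiagD3 {n : ℕ} (D : C) (cse : (∏ᶜ fun _ : Fin n => D) ⊗ D ⟶ D)
    (ap : D ⟶ D ⟹ D) : Prop :=
  (cse ⊗ₘ 𝟙 D) ≫ (ap ⊗ₘ 𝟙 D) ≫ ev' D D =
    (α_ (∏ᶜ fun _ : Fin n => D) D D).hom ≫
      (𝟙 (∏ᶜ fun _ : Fin n => D) ⊗ₘ (ap ⊗ₘ 𝟙 D)) ≫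
      (𝟙 (∏ᶜ fun _ : Fin n => D) ⊗ₘ ev' D D) ≫ cse

/-- The morphism `case♯ = Λ(≅ ; (id × ev) ; case)`. -/
def caseSharp {n : ℕ} (D : C) (cse : (∏ᶜ fun _ : Fin n => D) ⊗ D ⟶ D) :
    (∏ᶜ fun _ : Fin n => D) ⊗ (D ⟹ D) ⟶ D ⟹ D :=
  curry' ((α_ (∏ᶜ fun _ : Fin n => D) (D ⟹ D) D).hom ≫
    (𝟙 (∏ᶜ fun _ : Fin n => D) ⊗ₘ ev' D D) ≫ cse)

/-- Diagram (D4), expressing the CaseLam rule. -/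
def DiagD4 {n : ℕ} (D : C) (cse : (∏ᶜ fun _ : Fin n => D) ⊗ D ⟶ D)
    (lm : (D ⟹ D) ⟶ D) : Prop :=
  caseSharp D cse ≫ lm = (𝟙 (∏ᶜ fun _ : Fin n => D) ⊗ₘ lm) ≫ cse

lemma uncurry'_eq {Y A B : C} (f : Y ⟶ A ⟹ B) :
    (f ⊗ₘ 𝟙 A) ≫ ev' A B = (β_ Y A).hom ≫ MonoidalClosed.uncurry f := by
  rw [ev', ← Category.assoc, BraidedCategory.braiding_naturality]
  simp [MonoidalClosed.uncurry_eq, MonoidalCategory.tensorHom_def]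

lemma uncurry'_curry' {Y A B : C} (g : Y ⊗ A ⟶ B) :
    (curry' g ⊗ₘ 𝟙 A) ≫ ev' A B = g := by
  rw [uncurry'_eq, curry', MonoidalClosed.uncurry_curry, ← Category.assoc]
  simp

lemma curry'_inj {Y A B : C} {f g : Y ⟶ A ⟹ B}
    (h : (f ⊗ₘ 𝟙 A) ≫ ev' A B = (g ⊗ₘ 𝟙 A) ≫ ev' A B) : f = g := by
  apply MonoidalClosed.uncurry_injective
  rw [uncurry'_eq, uncurry'_eq] at h
  exact (Iso.cancel_iso_hom_left _ _ _).mp h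

/-- In a Cartesian closed category with an object `D`, morphisms
`app : D ⟶ D^D` and `lam : D^D ⟶ D` forming an isomorphism, a point `fail`,
points `c_i`, and a morphism `case : D^n × D ⟶ D`, the diagram (D3)
(CaseApp) commutes if and only if the diagram (D4) (CaseLam) commutes. -/
theorem diagD3_iff_diagD4 {n : ℕ} (D : C)
    (ap : D ⟶ D ⟹ D) (lm : (D ⟹ D) ⟶ D)
    (h₁ : lm ≫ ap = 𝟙 (D ⟹ D)) (h₂ : ap ≫ lm = 𝟙 D)
    (fail : 𝟙_ C ⟶ D) (cs : Fin n → (𝟙_ C ⟶ D))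
    (cse : (∏ᶜ fun _ : Fin n => D) ⊗ D ⟶ D) :
    DiagD3 D cse ap ↔ DiagD4 D cse lm := by
  -- Step 1: D4 is equivalent to an equation for caseSharp
  have key : DiagD4 D cse lm ↔ caseSharp D cse = (𝟙 (∏ᶜ fun _ : Fin n => D) ⊗ₘ lm) ≫ cse ≫ ap := by
    constructor
    · intro h
      have := congrArg (· ≫ ap) h
      simpa [Category.assoc, h₁] using this
    · intro h
      rw [DiagD4, h]
      simp [Category.assoc, h₂]
  rw [key]
  -- Step 2: uncurry both sides
  constructor
  · intro h3
    apply curry'_inj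
    rw [caseSharp, uncurry'_curry']
    rw [comp_tensor_id, comp_tensor_id, Category.assoc, Category.assoc, h3]
    rw [← Category.assoc ((𝟙 (∏ᶜ fun _ : Fin n => D) ⊗ₘ lm) ⊗ₘ 𝟙 D), associator_naturality]
    slice_rhs 2 3 => rw [← id_tensor_comp, ← comp_tensor_id, h₁]
    simp
  · intro h4
    have h4' := congrArg (fun f => (f ⊗ₘ 𝟙 D) ≫ ev' D D) h4
    simp only [caseSharp, uncurry'_curry', comp_tensor_id, Category.assoc] at h4'
    rw [DiagD3]
    have := congrArg (fun f => (((𝟙 (∏ᶜ fun _ : Fin n => D) ⊗ₘ ap) ⊗ₘ 𝟙 D) ≫ f)) h4'.symm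
    simp only at this
    rw [← Category.assoc, ← comp_tensor_id, ← id_tensor_comp, h₂] at this
    simp only [id_tensorHom_id, Category.id_comp] at this
    rw [← Category.assoc, ← comp_tensor_id] at this ⊢
    rw [this]
    rw [← Category.assoc ((𝟙 (∏ᶜ fun _ : Fin n => D) ⊗ₘ ap) ⊗ₘ 𝟙 D), associator_naturality]
    simp

end
end
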